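/- Let (Ω, ℙ) be a probability space, S a standard Borel space, X : Ω → S a random element with distribution μ, and E : Ω → ℝ a random variable independent of X whose distribution has density p with respect to Lebesgue measure. Let g : ℝ × S → ℝ be measurable such that for each x ∈ S the map u ↦ g(u, x) is a strictly increasing differentiable bijection of ℝ with everywhere positive derivative; write g⁻¹(·, x) for its inverse, set C = g(E, X) and ω(x, c) = p(g⁻¹(c, x)) / ∂ᵤg(g⁻¹(c, x), x). Let h : S → T be a measurable map into a standard Borel space T (the intervened structural functions producing the counterfactual output from the background variables). Then for (law of C)-almost every c, the regular conditional distribution of h(X) given C = c equals the pushforward under h of the normalized reweighted prior: condDistrib (h ∘ X) C ℙ (c) = Measure.map h ((μ.withDensity (x ↦ ω(x, c)) univ)⁻¹ • μ.withDensity (x ↦ ω(x, c))). -/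

import Mathlib

open MeasureTheory ProbabilityTheory

open scoped ENNReal

/-- One-dimensional change of variables for the Lebesgue integral. -/
lemma lintegral_image_eq_lintegral_abs_deriv_mul'
    {s : Set ℝ} {f f' : ℝ → ℝ} (hs : MeasurableSet s)
    (hf' : ∀ x ∈ s, HasDerivWithinAt f (f' x) s x) (hf : Set.InjOn f s) (g : ℝ → ℝ≥0∞) :
    ∫⁻ x in f '' s, g x = ∫⁻ x in s, ENNReal.ofReal |f' x| * g (f x) := by
  simpa only [ContinuousLinearMap.det_toSpanSingleton] using
    MeasureTheory.lintegral_image_eq_lintegral_abs_det_fderiv_mul volume hs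
      (fun x hx => (hf' x hx).hasFDerivWithinAt) hf g

theorem condDistrib_counterfactual_eq_map_normalized_weighted_prior
    {Ω S T : Type*} [MeasurableSpace Ω]
    [MeasurableSpace S] [StandardBorelSpace S] [Nonempty S]
    [MeasurableSpace T] [StandardBorelSpace T] [Nonempty T]
    (P : Measure Ω) [IsProbabilityMeasure P]
    (X : Ω → S) (hX : Measurable X)
    (μ : Measure S) (hμ : μ = P.map X)
    (E : Ω → ℝ) (hE : Measurable E)
    (hindep : IndepFun E X P)
    (p : ℝ → ℝ) (hp_meas : Measurable p) (hp_nonneg : ∀ x, 0 ≤ p x)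
    (hE_law : P.map E = volume.withDensity (fun u => ENNReal.ofReal (p u)))
    (g : ℝ × S → ℝ) (g' : ℝ × S → ℝ) (gInv : ℝ × S → ℝ)
    (hg_meas : Measurable g) (hg'_meas : Measurable g') (hgInv_meas : Measurable gInv)
    (hg_deriv : ∀ x u, HasDerivAt (fun u => g (u, x)) (g' (u, x)) u)
    (hg'_pos : ∀ x u, 0 < g' (u, x))
    (hg_mono : ∀ x, StrictMono (fun u => g (u, x)))
    (hg_bij : ∀ x, Function.Bijective (fun u => g (u, x)))
    (hgInv_left : ∀ x u, gInv (g (u, x), x) = u)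
    (hgInv_right : ∀ x c, g (gInv (c, x), x) = c)
    (C : Ω → ℝ) (hC : C = fun ω => g (E ω, X ω))
    (h : S → T) (hh : Measurable h) :
    ∀ᵐ c ∂(P.map C),
      condDistrib (h ∘ X) C P c =
        Measure.map h
          (((μ.withDensity
              (fun x => ENNReal.ofReal (p (gInv (c, x)) / g' (gInv (c, x), x)))) Set.univ)⁻¹ •
            μ.withDensity
              (fun x => ENNReal.ofReal (p (gInv (c, x)) / g' (gInv (c, x), x)))) := by
  haveI hμ_prob : IsProbabilityMeasure μ := hμ ▸ Measure.isProbabilityMeasure_map hX.aemeasurable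
  haveI hE_prob : IsProbabilityMeasure (P.map E) := Measure.isProbabilityMeasure_map hE.aemeasurable
  set pd : ℝ → ℝ≥0∞ := fun u => ENNReal.ofReal (p u) with hpd_def
  haveI hpd_prob : IsProbabilityMeasure (volume.withDensity pd) := hE_law ▸ hE_prob
  have hC_meas : Measurable C := by rw [hC]; exact hg_meas.comp (hE.prodMk hX)
  -- the weight function
  set W : ℝ × S → ℝ≥0∞ :=
    (fun q : ℝ × S => ENNReal.ofReal (p (gInv q) / g' (gInv q, q.2))) with hW_def
  have hW_meas : Measurable W := by
    apply Measurable.ennreal_ofReal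
    exact (hp_meas.comp hgInv_meas).div (hg'_meas.comp (hgInv_meas.prodMk measurable_snd))
  -- the unnormalized posterior and its total mass
  set ν : ℝ → Measure S := fun c => μ.withDensity (fun x => W (c, x)) with hν_def
  set ρb : ℝ → ℝ≥0∞ := fun c => ∫⁻ x, W (c, x) ∂μ with hρb_def
  have hρb_meas : Measurable ρb := hW_meas.lintegral_prod_right'
  have hν_apply : ∀ (c : ℝ) {s : Set S}, MeasurableSet s → ν c s = ∫⁻ x in s, W (c, x) ∂μ :=
    fun c s hs => withDensity_apply _ hs
  have hν_univ : ∀ c, ν c Set.univ = ρb c := fun c => by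
    rw [hν_apply c MeasurableSet.univ, setLIntegral_univ]
  -- one-dimensional change of variables
  have key1 : ∀ (x : S) (B : Set ℝ), MeasurableSet B →
      ∫⁻ c in B, W (c, x) = ∫⁻ u in (fun u => g (u, x)) ⁻¹' B, pd u := by
    intro x B hB
    have hfx : Measurable (fun u => g (u, x)) :=
      hg_meas.comp (measurable_id.prodMk measurable_const)
    have hpre : MeasurableSet ((fun u => g (u, x)) ⁻¹' B) := hfx hB
    have himg : (fun u => g (u, x)) '' ((fun u => g (u, x)) ⁻¹' B) = B :=
      Set.image_preimage_eq _ (hg_bij x).2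
    calc ∫⁻ c in B, W (c, x)
        = ∫⁻ c in (fun u => g (u, x)) '' ((fun u => g (u, x)) ⁻¹' B), W (c, x) := by rw [himg]
      _ = ∫⁻ u in (fun u => g (u, x)) ⁻¹' B,
            ENNReal.ofReal |g' (u, x)| * W (g (u, x), x) :=
          lintegral_image_eq_lintegral_abs_deriv_mul' hpre
            (fun u _ => (hg_deriv x u).hasDerivWithinAt) ((hg_mono x).injective.injOn) _
      _ = ∫⁻ u in (fun u => g (u, x)) ⁻¹' B, pd u := by
          refine setLIntegral_congr_fun hpre (fun u _ => ?_)
          have hgpos := hg'_pos x u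
          rw [hW_def]
          simp only [hgInv_left x u]
          rw [abs_of_pos hgpos, ← ENNReal.ofReal_mul hgpos.le, mul_comm,
            div_mul_cancel₀ _ (ne_of_gt hgpos)]
  -- the joint law of (C, X)
  have hEX : P.map (fun a => (E a, X a)) = (volume.withDensity pd).prod μ := by
    rw [(indepFun_iff_map_prod_eq_prod_map_map hE.aemeasurable hX.aemeasurable).mp hindep,
      hE_law, hμ]
  have hjoint : P.map (fun a => (C a, X a)) = (volume.prod μ).withDensity W := by
    have hcomp : (fun a => (C a, X a)) = (fun q : ℝ × S => (g q, q.2)) ∘ (fun a => (E a, X a)) := by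
      funext a; simp [hC]
    have hgq : Measurable (fun q : ℝ × S => (g q, q.2)) := hg_meas.prodMk measurable_snd
    rw [hcomp, ← Measure.map_map hgq (hE.prodMk hX), hEX]
    haveI : IsProbabilityMeasure (((volume.withDensity pd).prod μ).map (fun q : ℝ × S => (g q, q.2))) :=
      Measure.isProbabilityMeasure_map hgq.aemeasurable
    have hrect : ∀ (B : Set ℝ) (A : Set S), MeasurableSet B → MeasurableSet A →
        (((volume.withDensity pd).prod μ).map (fun q : ℝ × S => (g q, q.2))) (B ×ˢ A)
          = ((volume.prod μ).withDensity W) (B ×ˢ A) := by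
      intro B A hB hA
      have hAind : (fun x => (volume.withDensity pd)
            ((fun u => (u, x)) ⁻¹' ((fun q : ℝ × S => (g q, q.2)) ⁻¹' (B ×ˢ A))))
          = A.indicator (fun x => ∫⁻ c in B, W (c, x)) := by
        funext x
        by_cases hxA : x ∈ A
        · have hpre : (fun u => (u, x)) ⁻¹' ((fun q : ℝ × S => (g q, q.2)) ⁻¹' (B ×ˢ A))
              = (fun u => g (u, x)) ⁻¹' B := by
            ext u; simp [hxA]
          have hfx : Measurable (fun u => g (u, x)) :=
            hg_meas.comp (measurable_id.prodMk measurable_const)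
          rw [hpre, withDensity_apply _ (hfx hB), ← key1 x B hB, Set.indicator_of_mem hxA]
        · have hpre : (fun u => (u, x)) ⁻¹' ((fun q : ℝ × S => (g q, q.2)) ⁻¹' (B ×ˢ A))
              = ∅ := by
            ext u; simp [hxA]
          rw [hpre, Set.indicator_of_notMem hxA, measure_empty]
      rw [Measure.map_apply hgq (hB.prod hA),
        Measure.prod_apply_symm (hgq (hB.prod hA)), hAind, lintegral_indicator hA,
        withDensity_apply _ (hB.prod hA), ← Measure.prod_restrict,
        lintegral_prod_symm _ hW_meas.aemeasurable]
    refine ext_of_generate_finite _ generateFrom_prod.symm isPiSystem_prod ?_ ?_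
    · rintro s ⟨B, hB, A, hA, rfl⟩
      exact hrect B A hB hA
    · rw [← Set.univ_prod_univ]
      exact hrect _ _ MeasurableSet.univ MeasurableSet.univ
  -- the marginal law of C
  have hmargC : P.map C = volume.withDensity ρb := by
    have hcomp : C = Prod.fst ∘ (fun a => (C a, X a)) := rfl
    rw [hcomp, ← Measure.map_map measurable_fst (hC_meas.prodMk hX), hjoint]
    ext B hB
    rw [Measure.map_apply measurable_fst hB, ← Set.prod_univ,
      withDensity_apply _ (hB.prod MeasurableSet.univ), ← Measure.prod_restrict,
      Measure.restrict_univ, lintegral_prod _ hW_meas.aemeasurable,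
      withDensity_apply _ hB]
  -- a.e. the total mass is finite and positive
  have hae_top : ∀ᵐ c ∂(P.map C), ρb c ≠ ∞ := by
    rw [hmargC]
    refine (withDensity_absolutelyContinuous volume ρb) ?_
    have h1 : ∫⁻ c, ρb c ∂volume ≠ ∞ := by
      haveI : IsProbabilityMeasure (P.map C) := Measure.isProbabilityMeasure_map hC_meas.aemeasurable
      have : (volume.withDensity ρb) Set.univ = 1 := by
        rw [← hmargC]; exact measure_univ
      rw [withDensity_apply _ MeasurableSet.univ, setLIntegral_univ] at this
      rw [this]; exact ENNReal.one_ne_top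
    exact ae_lt_top hρb_meas h1 |>.mono fun c hc => hc.ne
  have hae_zero : ∀ᵐ c ∂(P.map C), ρb c ≠ 0 := by
    rw [hmargC, ae_iff]
    have hset : MeasurableSet {c | ¬ ρb c ≠ 0} := by
      simp only [not_not]
      exact hρb_meas (measurableSet_singleton 0)
    rw [withDensity_apply _ hset]
    rw [setLIntegral_congr_fun hset (fun c hc => not_not.mp hc)]
    simp
  -- the candidate kernel
  set κf : ℝ → Measure T := fun c =>
    if ρb c = 0 ∨ ρb c = ∞ then P.map (h ∘ X) else ((ρb c)⁻¹ • ν c).map h with hκf_def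
  have hbad_meas : MeasurableSet {c | ρb c = 0 ∨ ρb c = ∞} := by
    have : {c | ρb c = 0 ∨ ρb c = ∞} = ρb ⁻¹' {0} ∪ ρb ⁻¹' {∞} := by
      ext c; simp [Set.mem_union]
    rw [this]
    exact (hρb_meas (measurableSet_singleton 0)).union (hρb_meas (measurableSet_singleton ∞))
  have hκf_meas : Measurable κf := by
    refine Measure.measurable_of_measurable_coe _ fun s hs => ?_
    have heq : (fun c => κf c s) = fun c =>
        if ρb c = 0 ∨ ρb c = ∞ then (P.map (h ∘ X)) s
        else (ρb c)⁻¹ * ∫⁻ x in h ⁻¹' s, W (c, x) ∂μ := by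
      funext c
      rw [hκf_def]
      by_cases hc : ρb c = 0 ∨ ρb c = ∞
      · simp only [hc, if_true]
      · simp only [hc, if_false]
        rw [Measure.map_apply hh hs, Measure.smul_apply, smul_eq_mul, hν_apply c (hh hs)]
    rw [heq]
    refine Measurable.ite hbad_meas measurable_const ?_
    exact hρb_meas.inv.mul (hW_meas.lintegral_prod_right' (ν := μ.restrict (h ⁻¹' s)))
  set κ : ProbabilityTheory.Kernel ℝ T := ⟨κf, hκf_meas⟩ with hκ_def
  have hκ_apply : ∀ c, κ c = κf c := fun c => rfl
  haveI hκ_markov : IsMarkovKernel κ := by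
    constructor
    intro c
    rw [hκ_apply, hκf_def]
    by_cases hc : ρb c = 0 ∨ ρb c = ∞
    · simp only [hc, if_true]
      exact Measure.isProbabilityMeasure_map (hh.comp hX).aemeasurable
    · simp only [hc, if_false]
      push_neg at hc
      constructor
      rw [Measure.map_apply hh MeasurableSet.univ, Set.preimage_univ, Measure.smul_apply,
        smul_eq_mul, hν_univ, ENNReal.inv_mul_cancel hc.1 hc.2]
  -- a.e. finiteness w.r.t. volume
  have hvol_top : ∀ᵐ c ∂volume, ρb c < ∞ := by
    haveI : IsProbabilityMeasure (P.map C) := Measure.isProbabilityMeasure_map hC_meas.aemeasurable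
    have h1 : ∫⁻ c, ρb c ∂volume ≠ ∞ := by
      have h2 : (volume.withDensity ρb) Set.univ = 1 := by
        rw [← hmargC]; exact measure_univ
      rw [withDensity_apply _ MeasurableSet.univ, setLIntegral_univ] at h2
      rw [h2]; exact ENNReal.one_ne_top
    exact ae_lt_top hρb_meas h1
  -- the disintegration identity
  have hjoint2 : P.map (fun a => (C a, (h ∘ X) a)) = (P.map C).compProd κ := by
    have hcomp : (fun a => (C a, (h ∘ X) a))
        = (Prod.map id h) ∘ (fun a => (C a, X a)) := rfl
    have hmap : Measurable (Prod.map (id : ℝ → ℝ) h) := measurable_id.prodMap hh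
    rw [hcomp, ← Measure.map_map hmap (hC_meas.prodMk hX), hjoint]
    ext s hs
    have hsc : ∀ c : ℝ, MeasurableSet (Prod.mk c ⁻¹' s) := fun c => measurable_prodMk_left hs
    have hpre_meas : MeasurableSet ((Prod.map (id : ℝ → ℝ) h) ⁻¹' s) := hmap hs
    have hLHS : (((volume.prod μ).withDensity W).map (Prod.map id h)) s
        = ∫⁻ c, (ν c) (h ⁻¹' (Prod.mk c ⁻¹' s)) ∂volume := by
      rw [Measure.map_apply hmap hs, withDensity_apply _ hpre_meas,
        ← lintegral_indicator hpre_meas, lintegral_prod _ (hW_meas.indicator hpre_meas).aemeasurable]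
      refine lintegral_congr fun c => ?_
      have hind : ∀ x : S, ((Prod.map (id : ℝ → ℝ) h) ⁻¹' s).indicator W (c, x)
          = (h ⁻¹' (Prod.mk c ⁻¹' s)).indicator (fun x => W (c, x)) x := by
        intro x
        by_cases hx : (c, h x) ∈ s
        · rw [Set.indicator_of_mem (by exact hx), Set.indicator_of_mem (by exact hx)]
        · rw [Set.indicator_of_notMem (by exact hx), Set.indicator_of_notMem (by exact hx)]
      simp_rw [hind]
      rw [lintegral_indicator (hh (hsc c)), ← hν_apply c (hh (hsc c))]
    rw [hLHS, Measure.compProd_apply hs, hmargC,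
      lintegral_withDensity_eq_lintegral_mul _ hρb_meas
        (Kernel.measurable_kernel_prodMk_left hs)]
    refine lintegral_congr_ae (hvol_top.mono fun c hc => ?_)
    simp only [Pi.mul_apply]
    by_cases hc0 : ρb c = 0
    · have hle : (ν c) (h ⁻¹' (Prod.mk c ⁻¹' s)) ≤ ν c Set.univ := measure_mono (Set.subset_univ _)
      rw [hν_univ c, hc0] at hle
      rw [hc0, zero_mul, le_zero_iff.mp hle]
    · have hcond : ¬ (ρb c = 0 ∨ ρb c = ∞) := by
        push_neg; exact ⟨hc0, hc.ne⟩
      rw [hκ_apply, hκf_def]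
      simp only [hcond, if_false]
      rw [Measure.map_apply hh (hsc c), Measure.smul_apply, smul_eq_mul, ← mul_assoc,
        ENNReal.mul_inv_cancel hc0 hc.ne, one_mul]
  -- conclude via uniqueness of disintegration
  haveI : IsProbabilityMeasure (P.map (fun a => (C a, (h ∘ X) a))) :=
    Measure.isProbabilityMeasure_map ((hC_meas.prodMk (hh.comp hX)).aemeasurable)
  have hfst : (P.map (fun a => (C a, (h ∘ X) a))).fst = P.map C :=
    Measure.fst_map_prodMk (hh.comp hX)
  have huniq := eq_condKernel_of_measure_eq_compProd κ
    (ρ := P.map (fun a => (C a, (h ∘ X) a))) (by rw [hfst]; exact hjoint2)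
  rw [hfst] at huniq
  filter_upwards [huniq, hae_top, hae_zero] with c h1 h2 h3
  have hcd : (condDistrib (h ∘ X) C P) c = κ c := by
    rw [condDistrib_def]; exact h1.symm
  rw [hcd, hκ_apply, hκf_def]
  have hcond : ¬ (ρb c = 0 ∨ ρb c = ∞) := by push_neg; exact ⟨h3, h2⟩
  simp only [hcond, if_false]
  have hfc : (fun x => ENNReal.ofReal (p (gInv (c, x)) / g' (gInv (c, x), x)))
      = fun x => W (c, x) := rfl
  rw [hfc]
  have hνc : μ.withDensity (fun x => W (c, x)) = ν c := rfl
  rw [hνc, hν_univ c]
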